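/- Under the adaptive-stencil mesh setup, assume u_{i+1} ≠ u_i, and let u_min and u_max be real numbers with u_min ≤ min(u_i, u_{i+1}) and u_max ≥ max(u_i, u_{i+1}). Define mℓ and mr by: if u_i < u_{i+1}, mℓ = min(0, (u_min − u_i)/(u_{i+1} − u_i)) and mr = max(1, (u_max − u_i)/(u_{i+1} − u_i)); if u_{i+1} < u_i, mℓ = min(0, (u_max − u_i)/(u_{i+1} − u_i)) and mr = max(1, (u_min − u_i)/(u_{i+1} − u_i)). Define the bound sequences by B_1^− = (−4(mr−1) − 1)·d_1 and B_1^+ = (−4·mℓ + 1)·d_1, and for 2 ≤ j ≤ n−1: if t_j ≤ 0 then B_j^− = (B_{j−1}^− − λ̄_{j−1})·d_j/(1−t_j) and B_j^+ = (B_{j−1}^+ − λ̄_{j−1})·d_j/(1−t_j); if t_j ≥ 1 then B_j^− = (B_{j−1}^+ − λ̄_{j−1})·d_j/(−t_j) and B_j^+ = (B_{j−1}^− − λ̄_{j−1})·d_j/(−t_j). If B_j^− ≤ λ̄_j ≤ B_j^+ for every 1 ≤ j ≤ n−1, then for every x ∈ [x_i, x_{i+1}], u_min ≤ U_n(x) ≤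 u_max. -/

import Mathlib

/-- Divided differences over consecutive nodes: `divdiff x u k m = U[x_k, …, x_{k+m}]`. -/
noncomputable def divdiff (x u : ℕ → ℝ) : ℕ → ℕ → ℝ
  | k, 0 => u k
  | k, m + 1 => (divdiff x u (k + 1) m - divdiff x u k m) / (x (k + m + 1) - x k)

/-- `stMin e j = min{e_0, …, e_j}`. -/
def stMin (e : ℕ → ℕ) (j : ℕ) : ℕ := (Finset.range (j + 1)).inf' Finset.nonempty_range_add_one e

/-- `stMax e j = max{e_0, …, e_j}`. -/
def stMax (e : ℕ → ℕ) (j : ℕ) : ℕ := (Finset.range (j + 1)).sup' Finset.nonempty_range_add_one e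

/-- `U[V_j]`: the divided difference over the consecutive nodes of the stencil
`V_j = {e_0, …, e_{j+1}}`, from its leftmost node `x_j^l` to its rightmost node `x_j^r`. -/
noncomputable def UV (x u : ℕ → ℝ) (e : ℕ → ℕ) (j : ℕ) : ℝ :=
  divdiff x u (stMin e (j + 1)) (stMax e (j + 1) - stMin e (j + 1))

/-- The Newton interpolant of degree `n` on the adaptive stencil:
`U_n(y) = u_i + Σ_{j=0}^{n−1} U[V_j] · Π_{k=0}^{j} (y − x_{e_k})`. -/
noncomputable def Un (x u : ℕ → ℝ) (e : ℕ → ℕ) (i n : ℕ) (y : ℝ) : ℝ :=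
  u i + ∑ j ∈ Finset.range n, UV x u e j * ∏ k ∈ Finset.range (j + 1), (y - x (e k))

/-- Normalized stencil width `d_j = (x_j^r − x_j^l)/(x_{i+1} − x_i)`. -/
noncomputable def dN (x : ℕ → ℝ) (e : ℕ → ℕ) (i j : ℕ) : ℝ :=
  (x (stMax e (j + 1)) - x (stMin e (j + 1))) / (x (i + 1) - x i)

/-- Normalized position `t_j = (x_{e_j} − x_i)/(x_{i+1} − x_i)` of the added stencil point. -/
noncomputable def tN (x : ℕ → ℝ) (e : ℕ → ℕ) (i j : ℕ) : ℝ :=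
  (x (e j) - x i) / (x (i + 1) - x i)

/-- Scaled divided-difference ratio
`λ̄_j = (U[V_j]/U[x_i, x_{i+1}]) · Π_{k=1}^{j} (x_k^r − x_k^l)`. -/
noncomputable def lamBar (x u : ℕ → ℝ) (e : ℕ → ℕ) (i j : ℕ) : ℝ :=
  (UV x u e j / divdiff x u i 1) *
    ∏ k ∈ Finset.Icc 1 j, (x (stMax e (k + 1)) - x (stMin e (k + 1)))

/-- The expanded normalized Newton form
`S_n(s) = s + Σ_{j=1}^{n−1} (λ̄_j / (d_1⋯d_j)) · s·(s−1) · Π_{k=2}^{j} (s − t_k)`. -/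
noncomputable def Sn (n : ℕ) (d t lam : ℕ → ℝ) (s : ℝ) : ℝ :=
  s + ∑ j ∈ Finset.Icc 1 (n - 1),
    (lam j / ∏ k ∈ Finset.Icc 1 j, d k) * (s * (s - 1)) * ∏ k ∈ Finset.Icc 2 j, (s - t k)

lemma xmono {N : ℕ} {x : ℕ → ℝ} (hx : ∀ k, k < N → x k < x (k+1)) :
    ∀ a b, a < b → b ≤ N → x a < x b := by
  intro a b hab hbN
  induction b with
  | zero => omega
  | succ m ih =>
    rcases Nat.lt_succ_iff_lt_or_eq.mp hab with h | h
    · exact lt_trans (ih h (by omega)) (hx m (by omega))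
    · subst h; exact hx a (by omega)

lemma xmono' {N : ℕ} {x : ℕ → ℝ} (hx : ∀ k, k < N → x k < x (k+1)) :
    ∀ a b, a ≤ b → b ≤ N → x a ≤ x b := by
  intro a b hab hbN
  rcases eq_or_lt_of_le hab with h | h
  · subst h; rfl
  · exact (xmono hx a b h hbN).le

lemma stMin_le {e : ℕ → ℕ} {k j : ℕ} (h : k ≤ j) : stMin e j ≤ e k :=
  Finset.inf'_le _ (Finset.mem_range.mpr (by omega))

lemma le_stMax {e : ℕ → ℕ} {k j : ℕ} (h : k ≤ j) : e k ≤ stMax e j :=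
  Finset.le_sup' _ (Finset.mem_range.mpr (by omega))

lemma stMax_le {e : ℕ → ℕ} {j m : ℕ} (h : ∀ k, k ≤ j → e k ≤ m) : stMax e j ≤ m := by
  apply Finset.sup'_le
  intro k hk
  exact h k (by simpa [Nat.lt_succ_iff] using Finset.mem_range.mp hk)

lemma stMin_one {e : ℕ → ℕ} : stMin e 1 = min (e 0) (e 1) := by
  simp [stMin, Finset.range_add_one]; exact inf_comm _ _

lemma stMax_one {e : ℕ → ℕ} : stMax e 1 = max (e 0) (e 1) := by
  simp [stMax, Finset.range_add_one]; exact sup_comm _ _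

/-- Core real-arithmetic bound: from `G ∈ [-4(mr-1)-1, -4ml+1]` conclude
`ml ≤ s + s(s-1)G ≤ mr` on `[0,1]`. -/
lemma sn_bound {s G ml mr : ℝ} (hs0 : 0 ≤ s) (hs1 : s ≤ 1) (hml : ml ≤ 0) (hmr : 1 ≤ mr)
    (hGm : -4*(mr-1)-1 ≤ G) (hGp : G ≤ -4*ml+1) :
    ml ≤ s + s*(s-1)*G ∧ s + s*(s-1)*G ≤ mr := by
  constructor
  · rcases le_or_gt 0 G with hG | hG
    · nlinarith [mul_nonneg (neg_nonneg.mpr hml) (sq_nonneg (2*s-1)),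
        mul_le_mul_of_nonneg_left hGp (mul_nonneg hs0 (by linarith : (0:ℝ) ≤ 1-s))]
    · nlinarith [mul_nonneg (mul_nonneg hs0 (by linarith : (0:ℝ) ≤ 1-s)) (by linarith : (0:ℝ) ≤ -G)]
  · rcases le_or_gt 0 G with hG | hG
    · nlinarith [mul_nonneg (mul_nonneg hs0 (by linarith : (0:ℝ) ≤ 1-s)) hG]
    · nlinarith [mul_nonneg (by linarith : (0:ℝ) ≤ mr - 1) (sq_nonneg (2*s-1)),
        mul_le_mul_of_nonneg_left hGm (mul_nonneg hs0 (by linarith : (0:ℝ) ≤ 1-s))]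

/-- Tail sums of the normalized Newton form. -/
noncomputable def Ttail (x u : ℕ → ℝ) (e : ℕ → ℕ) (i n : ℕ) (s : ℝ) (j : ℕ) : ℝ :=
  ∑ m ∈ Finset.Icc j (n - 1),
    (lamBar x u e i m / ∏ k ∈ Finset.Icc 1 m, dN x e i k) *
      ∏ k ∈ Finset.Icc (j + 1) m, (s - tN x e i k)

lemma Ttail_last (x u : ℕ → ℝ) (e : ℕ → ℕ) (i n : ℕ) (s : ℝ) :
    Ttail x u e i n s (n - 1) =
      lamBar x u e i (n - 1) / ∏ k ∈ Finset.Icc 1 (n - 1), dN x e i k := by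
  rw [Ttail, Finset.Icc_self, Finset.sum_singleton,
    Finset.Icc_eq_empty (a := n - 1 + 1) (b := n - 1) (by omega),
    Finset.prod_empty, mul_one]

lemma Ttail_rec (x u : ℕ → ℝ) (e : ℕ → ℕ) (i n : ℕ) (s : ℝ) (j : ℕ) (hj : j < n - 1) :
    Ttail x u e i n s j =
      lamBar x u e i j / (∏ k ∈ Finset.Icc 1 j, dN x e i k) +
        (s - tN x e i (j + 1)) * Ttail x u e i n s (j + 1) := by
  rw [Ttail, Ttail]
  have hins : Finset.Icc j (n - 1) = insert j (Finset.Icc (j + 1) (n - 1)) := by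
    ext a; simp only [Finset.mem_Icc, Finset.mem_insert]; omega
  rw [hins, Finset.sum_insert (by simp [Finset.mem_Icc]),
    Finset.Icc_eq_empty (a := j + 1) (b := j) (by omega), Finset.prod_empty, mul_one,
    Finset.mul_sum]
  congr 1
  apply Finset.sum_congr rfl
  intro m hm
  rw [Finset.mem_Icc] at hm
  have h2 : Finset.Icc (j + 1) m = insert (j + 1) (Finset.Icc (j + 2) m) := by
    ext a; simp only [Finset.mem_Icc, Finset.mem_insert]; omega
  rw [h2, Finset.prod_insert (by simp [Finset.mem_Icc])]
  ring

lemma ppi_id1 {B L P d t B' : ℝ} (hP : P ≠ 0) (hd : d ≠ 0) (ht : (1:ℝ) - t ≠ 0)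
    (hB' : B' = (B - L) * d / (1 - t)) :
    B / P = L / P + (1 - t) * (B' / (P * d)) := by
  subst hB'
  have h1 : (1 - t) * ((B - L) * d / (1 - t) / (P * d)) = (B - L) / P := by
    field_simp
  rw [h1, ← add_div, show L + (B - L) = B by ring]

lemma ppi_id2 {B L P d t B' : ℝ} (hP : P ≠ 0) (hd : d ≠ 0) (ht : -t ≠ 0)
    (hB' : B' = (B - L) * d / (-t)) :
    B / P = L / P + (-t) * (B' / (P * d)) := by
  subst hB'
  have ht' : t ≠ 0 := fun h => ht (by rw [h]; ring)
  have h1 : (-t) * ((B - L) * d / (-t) / (P * d)) = (B - L) / P := by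
    field_simp
  rw [h1, ← add_div, show L + (B - L) = B by ring]

set_option maxHeartbeats 1000000 in
/-- Positivity-preserving interpolation theorem on the adaptive stencil: if the scaled
divided-difference ratios satisfy the recursive bounds with PPI initialization built from
`mℓ, mr`, then `u_min ≤ U_n(x) ≤ u_max` on the base interval. -/
theorem ppi_interpolant_bounds
    (N n i : ℕ) (hn : 2 ≤ n) (hiN : i + 1 ≤ N)
    (x u : ℕ → ℝ)
    (hx : ∀ k, k < N → x k < x (k + 1))
    (e : ℕ → ℕ)
    (he0 : e 0 = i) (he1 : e 1 = i + 1)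
    (heN : ∀ j, j ≤ n → e j ≤ N)
    (heStep : ∀ j, 2 ≤ j → j ≤ n →
      e j + 1 = stMin e (j - 1) ∨ e j = stMax e (j - 1) + 1)
    (hu : u (i + 1) ≠ u i)
    (umin umax ml mr : ℝ)
    (humin : umin ≤ min (u i) (u (i + 1)))
    (humax : max (u i) (u (i + 1)) ≤ umax)
    (hm₁ : u i < u (i + 1) →
      ml = min 0 ((umin - u i) / (u (i + 1) - u i)) ∧
      mr = max 1 ((umax - u i) / (u (i + 1) - u i)))
    (hm₂ : u (i + 1) < u i →
      ml = min 0 ((umax - u i) / (u (i + 1) - u i)) ∧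
      mr = max 1 ((umin - u i) / (u (i + 1) - u i)))
    (Bm Bp : ℕ → ℝ)
    (hBm1 : Bm 1 = (-4 * (mr - 1) - 1) * dN x e i 1)
    (hBp1 : Bp 1 = (-4 * ml + 1) * dN x e i 1)
    (hBrec : ∀ j, 2 ≤ j → j ≤ n - 1 →
      (tN x e i j ≤ 0 →
        Bm j = (Bm (j - 1) - lamBar x u e i (j - 1)) * dN x e i j / (1 - tN x e i j) ∧
        Bp j = (Bp (j - 1) - lamBar x u e i (j - 1)) * dN x e i j / (1 - tN x e i j)) ∧
      (1 ≤ tN x e i j →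
        Bm j = (Bp (j - 1) - lamBar x u e i (j - 1)) * dN x e i j / (-tN x e i j) ∧
        Bp j = (Bm (j - 1) - lamBar x u e i (j - 1)) * dN x e i j / (-tN x e i j)))
    (hlam : ∀ j, 1 ≤ j → j ≤ n - 1 →
      Bm j ≤ lamBar x u e i j ∧ lamBar x u e i j ≤ Bp j)
    :
    ∀ y ∈ Set.Icc (x i) (x (i + 1)),
      umin ≤ Un x u e i n y ∧ Un x u e i n y ≤ umax := by
  have hh : 0 < x (i + 1) - x i := sub_pos.mpr (hx i (by omega))
  have hhne : x (i + 1) - x i ≠ 0 := ne_of_gt hh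
  have hΔne : u (i + 1) - u i ≠ 0 := sub_ne_zero.mpr hu
  have hD : divdiff x u i 1 = (u (i + 1) - u i) / (x (i + 1) - x i) := by
    show (divdiff x u (i + 1) 0 - divdiff x u i 0) / (x (i + 0 + 1) - x i) = _
    rfl
  have hDne : divdiff x u i 1 ≠ 0 := by
    rw [hD]; exact div_ne_zero hΔne hhne
  -- stencil facts
  have hminle : ∀ m, stMin e m ≤ i := fun m => he0 ▸ stMin_le (Nat.zero_le m)
  have hmaxge : ∀ m, 1 ≤ m → i + 1 ≤ stMax e m := fun m h1 => he1 ▸ le_stMax h1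
  have hmaxN : ∀ m, m ≤ n → stMax e m ≤ N := fun m hm =>
    stMax_le (fun k hk => heN k (le_trans hk hm))
  have hw : ∀ k, 1 ≤ k → k ≤ n - 1 → 0 < x (stMax e (k + 1)) - x (stMin e (k + 1)) := by
    intro k h1 h2
    have hk1 : k + 1 ≤ n := by omega
    apply sub_pos.mpr
    exact xmono hx _ _ (by have := hminle (k + 1); have := hmaxge (k + 1) (by omega); omega)
      (hmaxN _ hk1)
  have hd : ∀ k, 1 ≤ k → k ≤ n - 1 → 0 < dN x e i k := fun k h1 h2 =>
    div_pos (hw k h1 h2) hh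
  have hP : ∀ j, j ≤ n - 1 → 0 < ∏ k ∈ Finset.Icc 1 j, dN x e i k := by
    intro j hj
    apply Finset.prod_pos
    intro k hk
    rw [Finset.mem_Icc] at hk
    exact hd k hk.1 (le_trans hk.2 hj)
  -- sign of the normalized positions
  have ht : ∀ j, 2 ≤ j → j ≤ n - 1 → tN x e i j ≤ 0 ∨ 1 ≤ tN x e i j := by
    intro j h2 h1
    rcases heStep j h2 (by omega) with hL | hR
    · left
      have hie : e j < i := by
        have h0 := stMin_le (e := e) (j := j - 1) (k := 0) (Nat.zero_le _)
        rw [he0] at h0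
        omega
      have hxx : x (e j) ≤ x i := xmono' hx _ _ hie.le (by omega)
      rw [tN, div_nonpos_iff]
      right
      constructor <;> linarith
    · right
      have hie : i + 1 ≤ e j := by
        have h0 := le_stMax (e := e) (j := j - 1) (k := 1) (by omega)
        rw [he1] at h0
        omega
      have hxx : x (i + 1) ≤ x (e j) := xmono' hx _ _ hie (heN j (by omega))
      rw [tN, le_div_iff₀ hh]
      linarith
  -- ml ≤ 0 ≤ 1 ≤ mr
  have hmlmr : ml ≤ 0 ∧ 1 ≤ mr := by
    rcases lt_trichotomy (u i) (u (i + 1)) with hc | hc | hc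
    · obtain ⟨h1, h2⟩ := hm₁ hc
      exact ⟨h1 ▸ min_le_left _ _, h2 ▸ le_max_left _ _⟩
    · exact absurd hc.symm hu
    · obtain ⟨h1, h2⟩ := hm₂ hc
      exact ⟨h1 ▸ min_le_left _ _, h2 ▸ le_max_left _ _⟩
  obtain ⟨hml, hmr⟩ := hmlmr
  -- forward sign: Bm j ≤ 0 ≤ Bp j
  have hsign : ∀ j, 1 ≤ j → j ≤ n - 1 → Bm j ≤ 0 ∧ 0 ≤ Bp j := by
    intro j hj
    induction j, hj using Nat.le_induction with
    | base =>
      intro _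
      have hd1 := hd 1 le_rfl (by omega)
      constructor
      · rw [hBm1]; nlinarith
      · rw [hBp1]; nlinarith
    | succ j hj ih =>
      intro hj1
      have hdj := hd (j + 1) (by omega) hj1
      have hlamj := hlam j (by omega) (by omega)
      have hrec := hBrec (j + 1) (by omega) hj1
      simp only [Nat.add_sub_cancel] at hrec
      have ihj := ih (by omega)
      rcases ht (j + 1) (by omega) hj1 with h0 | h1
      · obtain ⟨em, ep⟩ := hrec.1 h0
        constructor
        · rw [em, div_nonpos_iff]
          right
          constructor
          · nlinarith [hlamj.1, ihj.1]
          · linarith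
        · rw [ep]
          apply div_nonneg _ (by linarith)
          nlinarith [hlamj.2, ihj.2]
      · obtain ⟨em, ep⟩ := hrec.2 h1
        constructor
        · rw [em, div_nonpos_iff]
          left
          constructor
          · nlinarith [hlamj.2, ihj.2]
          · linarith
        · rw [ep, div_nonneg_iff]
          right
          constructor
          · nlinarith [hlamj.1, ihj.1]
          · linarith
  -- now fix y
  intro y hy
  obtain ⟨hy0, hy1⟩ := hy
  set s : ℝ := (y - x i) / (x (i + 1) - x i) with hsdef
  have hs0 : 0 ≤ s := div_nonneg (by linarith) hh.le
  have hs1 : s ≤ 1 := (div_le_one hh).mpr (by linarith)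
  have hst : ∀ k, y - x (e k) = (x (i + 1) - x i) * (s - tN x e i k) := by
    intro k
    rw [tN, hsdef]
    field_simp
    ring
  have ht0 : tN x e i 0 = 0 := by rw [tN, he0]; simp
  have ht1 : tN x e i 1 = 1 := by rw [tN, he1]; exact div_self hhne
  -- the claim at j = n - 1
  have hbase : Bm (n - 1) / (∏ k ∈ Finset.Icc 1 (n - 1), dN x e i k) ≤ Ttail x u e i n s (n - 1) ∧
      Ttail x u e i n s (n - 1) ≤ Bp (n - 1) / (∏ k ∈ Finset.Icc 1 (n - 1), dN x e i k) := by
    rw [Ttail_last]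
    have hl := hlam (n - 1) (by omega) le_rfl
    have hPn := hP (n - 1) le_rfl
    exact ⟨(div_le_div_iff_of_pos_right hPn).mpr hl.1, (div_le_div_iff_of_pos_right hPn).mpr hl.2⟩
  -- backward induction
  have key : ∀ c j, 1 ≤ j → j ≤ n - 1 → n - 1 - j ≤ c →
      Bm j / (∏ k ∈ Finset.Icc 1 j, dN x e i k) ≤ Ttail x u e i n s j ∧
      Ttail x u e i n s j ≤ Bp j / (∏ k ∈ Finset.Icc 1 j, dN x e i k) := by
    intro c
    induction c with
    | zero =>
      intro j h1 h2 h3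
      have hj : j = n - 1 := by omega
      subst hj
      exact hbase
    | succ c ihc =>
      intro j h1 h2 h3
      by_cases hj : n - 1 ≤ j
      · have hj' : j = n - 1 := by omega
        subst hj'
        exact hbase
      · have hj2 : j < n - 1 := by omega
        obtain ⟨ihm, ihp⟩ := ihc (j + 1) (by omega) (by omega) (by omega)
        have hPj := hP j (by omega)
        have hPj1 := hP (j + 1) (by omega)
        have hdj := hd (j + 1) (by omega) (by omega)
        have hsignj := hsign (j + 1) (by omega) (by omega)
        have hbm' : Bm (j + 1) / (∏ k ∈ Finset.Icc 1 (j + 1), dN x e i k) ≤ 0 :=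
          div_nonpos_of_nonpos_of_nonneg hsignj.1 hPj1.le
        have hbp' : 0 ≤ Bp (j + 1) / (∏ k ∈ Finset.Icc 1 (j + 1), dN x e i k) :=
          div_nonneg hsignj.2 hPj1.le
        have hPsplit : ∏ k ∈ Finset.Icc 1 (j + 1), dN x e i k =
            (∏ k ∈ Finset.Icc 1 j, dN x e i k) * dN x e i (j + 1) :=
          Finset.prod_Icc_succ_top (by omega) _
        have hrec := hBrec (j + 1) (by omega) (by omega)
        simp only [Nat.add_sub_cancel] at hrec
        rw [Ttail_rec x u e i n s j hj2]
        rcases ht (j + 1) (by omega) (by omega) with h0 | h1t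
        · obtain ⟨em, ep⟩ := hrec.1 h0
          have h1tne : (1 : ℝ) - tN x e i (j + 1) ≠ 0 := by linarith
          have hidm : Bm j / (∏ k ∈ Finset.Icc 1 j, dN x e i k) =
              lamBar x u e i j / (∏ k ∈ Finset.Icc 1 j, dN x e i k) +
                (1 - tN x e i (j + 1)) *
                  (Bm (j + 1) / (∏ k ∈ Finset.Icc 1 (j + 1), dN x e i k)) := by
            rw [hPsplit]
            exact ppi_id1 hPj.ne' hdj.ne' h1tne em
          have hidp : Bp j / (∏ k ∈ Finset.Icc 1 j, dN x e i k) =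
              lamBar x u e i j / (∏ k ∈ Finset.Icc 1 j, dN x e i k) +
                (1 - tN x e i (j + 1)) *
                  (Bp (j + 1) / (∏ k ∈ Finset.Icc 1 (j + 1), dN x e i k)) := by
            rw [hPsplit]
            exact ppi_id1 hPj.ne' hdj.ne' h1tne ep
          constructor
          · rw [hidm]
            have e1 : (s - tN x e i (j + 1)) * (Bm (j + 1) / (∏ k ∈ Finset.Icc 1 (j + 1), dN x e i k))
                ≤ (s - tN x e i (j + 1)) * Ttail x u e i n s (j + 1) :=
              mul_le_mul_of_nonneg_left ihm (by linarith)
            have e2 : (1 - tN x e i (j + 1)) * (Bm (j + 1) / (∏ k ∈ Finset.Icc 1 (j + 1), dN x e i k))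
                ≤ (s - tN x e i (j + 1)) * (Bm (j + 1) / (∏ k ∈ Finset.Icc 1 (j + 1), dN x e i k)) :=
              mul_le_mul_of_nonpos_right (by linarith) hbm'
            linarith
          · rw [hidp]
            have e1 : (s - tN x e i (j + 1)) * Ttail x u e i n s (j + 1)
                ≤ (s - tN x e i (j + 1)) * (Bp (j + 1) / (∏ k ∈ Finset.Icc 1 (j + 1), dN x e i k)) :=
              mul_le_mul_of_nonneg_left ihp (by linarith)
            have e2 : (s - tN x e i (j + 1)) * (Bp (j + 1) / (∏ k ∈ Finset.Icc 1 (j + 1), dN x e i k))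
                ≤ (1 - tN x e i (j + 1)) * (Bp (j + 1) / (∏ k ∈ Finset.Icc 1 (j + 1), dN x e i k)) :=
              mul_le_mul_of_nonneg_right (by linarith) hbp'
            linarith
        · obtain ⟨em, ep⟩ := hrec.2 h1t
          have htne : -tN x e i (j + 1) ≠ 0 := by linarith
          have hidm : Bm j / (∏ k ∈ Finset.Icc 1 j, dN x e i k) =
              lamBar x u e i j / (∏ k ∈ Finset.Icc 1 j, dN x e i k) +
                (-tN x e i (j + 1)) *
                  (Bp (j + 1) / (∏ k ∈ Finset.Icc 1 (j + 1), dN x e i k)) := by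
            rw [hPsplit]
            exact ppi_id2 hPj.ne' hdj.ne' htne ep
          have hidp : Bp j / (∏ k ∈ Finset.Icc 1 j, dN x e i k) =
              lamBar x u e i j / (∏ k ∈ Finset.Icc 1 j, dN x e i k) +
                (-tN x e i (j + 1)) *
                  (Bm (j + 1) / (∏ k ∈ Finset.Icc 1 (j + 1), dN x e i k)) := by
            rw [hPsplit]
            exact ppi_id2 hPj.ne' hdj.ne' htne em
          constructor
          · rw [hidm]
            have e1 : (s - tN x e i (j + 1)) * (Bp (j + 1) / (∏ k ∈ Finset.Icc 1 (j + 1), dN x e i k))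
                ≤ (s - tN x e i (j + 1)) * Ttail x u e i n s (j + 1) :=
              mul_le_mul_of_nonpos_left ihp (by linarith)
            have e2 : (-tN x e i (j + 1)) * (Bp (j + 1) / (∏ k ∈ Finset.Icc 1 (j + 1), dN x e i k))
                ≤ (s - tN x e i (j + 1)) * (Bp (j + 1) / (∏ k ∈ Finset.Icc 1 (j + 1), dN x e i k)) :=
              mul_le_mul_of_nonneg_right (by linarith) hbp'
            linarith
          · rw [hidp]
            have e1 : (s - tN x e i (j + 1)) * Ttail x u e i n s (j + 1)
                ≤ (s - tN x e i (j + 1)) * (Bm (j + 1) / (∏ k ∈ Finset.Icc 1 (j + 1), dN x e i k)) :=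
              mul_le_mul_of_nonpos_left ihm (by linarith)
            have e2 : (s - tN x e i (j + 1)) * (Bm (j + 1) / (∏ k ∈ Finset.Icc 1 (j + 1), dN x e i k))
                ≤ (-tN x e i (j + 1)) * (Bm (j + 1) / (∏ k ∈ Finset.Icc 1 (j + 1), dN x e i k)) :=
              mul_le_mul_of_nonpos_right (by linarith) hbm'
            linarith
  -- bounds at j = 1
  obtain ⟨hk1, hk2⟩ := key (n - 1 - 1) 1 le_rfl (by omega) le_rfl
  have hd1 := hd 1 le_rfl (by omega)
  have hP1 : ∏ k ∈ Finset.Icc 1 1, dN x e i k = dN x e i 1 := by simp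
  rw [hP1, hBm1, mul_div_cancel_right₀ _ hd1.ne'] at hk1
  rw [hP1, hBp1, mul_div_cancel_right₀ _ hd1.ne'] at hk2
  -- bound the normalized interpolant
  obtain ⟨hSl, hSr⟩ := sn_bound hs0 hs1 hml hmr hk1 hk2
  -- identify Un with the normalized form
  have hUn : Un x u e i n y =
      u i + (u (i + 1) - u i) * (s + s * (s - 1) * Ttail x u e i n s 1) := by
    rw [Un]
    have hsplit : Finset.range n = insert 0 (Finset.Icc 1 (n - 1)) := by
      ext a; simp only [Finset.mem_range, Finset.mem_Icc, Finset.mem_insert]; omega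
    rw [hsplit, Finset.sum_insert (by simp)]
    have hUV0 : UV x u e 0 = divdiff x u i 1 := by
      rw [UV, stMin_one, stMax_one, he0, he1, min_eq_left (Nat.le_succ i),
        max_eq_right (Nat.le_succ i)]
      congr 1
      omega
    have hterm0 : UV x u e 0 * ∏ k ∈ Finset.range (0 + 1), (y - x (e k)) =
        (u (i + 1) - u i) * s := by
      rw [hUV0]
      norm_num
      rw [he0, hD, hsdef]
      field_simp
    have hterms : ∀ j ∈ Finset.Icc 1 (n - 1),
        UV x u e j * ∏ k ∈ Finset.range (j + 1), (y - x (e k)) =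
        (u (i + 1) - u i) *
          ((lamBar x u e i j / ∏ k ∈ Finset.Icc 1 j, dN x e i k) *
            (s * (s - 1)) * ∏ k ∈ Finset.Icc 2 j, (s - tN x e i k)) := by
      intro j hj
      rw [Finset.mem_Icc] at hj
      have hprod1 : ∏ k ∈ Finset.range (j + 1), (y - x (e k)) =
          (x (i + 1) - x i) ^ (j + 1) * ∏ k ∈ Finset.range (j + 1), (s - tN x e i k) :=
        calc ∏ k ∈ Finset.range (j + 1), (y - x (e k))
            = ∏ k ∈ Finset.range (j + 1),
                ((x (i + 1) - x i) * (s - tN x e i k)) :=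
              Finset.prod_congr rfl (fun k _ => hst k)
          _ = (∏ _k ∈ Finset.range (j + 1), (x (i + 1) - x i)) *
                ∏ k ∈ Finset.range (j + 1), (s - tN x e i k) := Finset.prod_mul_distrib
          _ = (x (i + 1) - x i) ^ (j + 1) *
                ∏ k ∈ Finset.range (j + 1), (s - tN x e i k) := by
              rw [Finset.prod_const, Finset.card_range]
      have hsplit2 : Finset.range (j + 1) = insert 0 (insert 1 (Finset.Icc 2 j)) := by
        ext a; simp only [Finset.mem_range, Finset.mem_insert, Finset.mem_Icc]; omega
      have hprod2 : ∏ k ∈ Finset.range (j + 1), (s - tN x e i k) =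
          s * ((s - 1) * ∏ k ∈ Finset.Icc 2 j, (s - tN x e i k)) := by
        rw [hsplit2, Finset.prod_insert (by simp), Finset.prod_insert (by simp), ht0, ht1,
          sub_zero]
      have hWpos : 0 < ∏ k ∈ Finset.Icc 1 j, (x (stMax e (k + 1)) - x (stMin e (k + 1))) := by
        apply Finset.prod_pos
        intro k hk
        rw [Finset.mem_Icc] at hk
        exact hw k hk.1 (le_trans hk.2 hj.2)
      have hPW : ∏ k ∈ Finset.Icc 1 j, dN x e i k =
          (∏ k ∈ Finset.Icc 1 j, (x (stMax e (k + 1)) - x (stMin e (k + 1)))) /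
            (x (i + 1) - x i) ^ j := by
        simp only [dN]
        rw [Finset.prod_div_distrib, Finset.prod_const, Nat.card_Icc, Nat.add_sub_cancel]
      have hcoef : UV x u e j * (x (i + 1) - x i) ^ (j + 1) =
          (u (i + 1) - u i) *
            (lamBar x u e i j / ∏ k ∈ Finset.Icc 1 j, dN x e i k) := by
        rw [lamBar, hPW, hD]
        field_simp
        ring
      calc UV x u e j * ∏ k ∈ Finset.range (j + 1), (y - x (e k))
          = (UV x u e j * (x (i + 1) - x i) ^ (j + 1)) *
              (s * ((s - 1) * ∏ k ∈ Finset.Icc 2 j, (s - tN x e i k))) := by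
            rw [hprod1, hprod2]; ring
        _ = ((u (i + 1) - u i) *
              (lamBar x u e i j / ∏ k ∈ Finset.Icc 1 j, dN x e i k)) *
              (s * ((s - 1) * ∏ k ∈ Finset.Icc 2 j, (s - tN x e i k))) := by rw [hcoef]
        _ = _ := by ring
    have hsum2 : ∑ m ∈ Finset.Icc 1 (n - 1),
        ((lamBar x u e i m / ∏ k ∈ Finset.Icc 1 m, dN x e i k) * (s * (s - 1)) *
          ∏ k ∈ Finset.Icc 2 m, (s - tN x e i k)) =
        s * (s - 1) * Ttail x u e i n s 1 := by
      rw [Ttail, Finset.mul_sum]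
      apply Finset.sum_congr rfl
      intro m hm
      ring
    rw [hterm0, Finset.sum_congr rfl hterms, ← Finset.mul_sum, hsum2]
    ring
  rw [hUn]
  rcases lt_trichotomy (u i) (u (i + 1)) with hc | hc | hc
  · obtain ⟨hml', hmr'⟩ := hm₁ hc
    have hΔ : 0 < u (i + 1) - u i := sub_pos.mpr hc
    have h1 : umin ≤ u i := le_trans humin (min_le_left _ _)
    have h2 : u (i + 1) ≤ umax := le_trans (le_max_right _ _) humax
    have hmlv : ml = (umin - u i) / (u (i + 1) - u i) := by
      rw [hml']
      exact min_eq_right (div_nonpos_of_nonpos_of_nonneg (by linarith) hΔ.le)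
    have hmrv : mr = (umax - u i) / (u (i + 1) - u i) := by
      rw [hmr']
      apply max_eq_right
      rw [le_div_iff₀ hΔ]
      linarith
    have hml2 : (u (i + 1) - u i) * ml = umin - u i := by
      rw [hmlv, mul_comm, div_mul_cancel₀ _ hΔne]
    have hmr2 : (u (i + 1) - u i) * mr = umax - u i := by
      rw [hmrv, mul_comm, div_mul_cancel₀ _ hΔne]
    constructor
    · nlinarith [mul_le_mul_of_nonneg_left hSl hΔ.le]
    · nlinarith [mul_le_mul_of_nonneg_left hSr hΔ.le]
  · exact absurd hc.symm hu
  · obtain ⟨hml', hmr'⟩ := hm₂ hc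
    have hΔ : u (i + 1) - u i < 0 := sub_neg.mpr hc
    have h1 : u i ≤ umax := le_trans (le_max_left _ _) humax
    have h2 : umin ≤ u (i + 1) := le_trans humin (min_le_right _ _)
    have hmlv : ml = (umax - u i) / (u (i + 1) - u i) := by
      rw [hml']
      exact min_eq_right (div_nonpos_of_nonneg_of_nonpos (by linarith) hΔ.le)
    have hmrv : mr = (umin - u i) / (u (i + 1) - u i) := by
      rw [hmr']
      apply max_eq_right
      rw [le_div_iff_of_neg hΔ]
      linarith
    have hml2 : (u (i + 1) - u i) * ml = umax - u i := by
      rw [hmlv, mul_comm, div_mul_cancel₀ _ hΔne]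
    have hmr2 : (u (i + 1) - u i) * mr = umin - u i := by
      rw [hmrv, mul_comm, div_mul_cancel₀ _ hΔne]
    constructor
    · nlinarith [mul_le_mul_of_nonpos_left hSr hΔ.le]
    · nlinarith [mul_le_mul_of_nonpos_left hSl hΔ.le]
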